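/- Let (Ω, 𝒜, m) be a σ-finite measure space and let f, g : Ω → (0,∞) be measurable functions such that f·dm and g·dm are nonzero finite measures; let μ and ν be their normalizations to probability measures. Let 0 < ε ≤ 1/10 and 0 ≤ δ ≤ 1, and suppose that for every measurable set S ⊆ Ω, μ(S) ≤ e^{ε/2}·ν(S) + δ and ν(S) ≤ e^{ε/2}·μ(S) + δ. Then the product measure μ ⊗ μ of the set {(x,y) ∈ Ω × Ω : g(x)·f(y) / (f(x)·g(y)) ∉ [e^{−2ε}, e^{2ε}]} is at most 12δ/ε. -/

import Mathlib

open MeasureTheory ENNReal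

lemma aux_withDensity {Ω : Type*} [MeasurableSpace Ω] (m : Measure Ω)
    (φ ψ : Ω → ℝ) (hψ : Measurable ψ) (a : ℝ) (ha : 0 ≤ a) (s : Set Ω)
    (hs : MeasurableSet s) (h : ∀ x ∈ s, a * φ x ≤ ψ x) :
    ENNReal.ofReal a * (m.withDensity fun x => ENNReal.ofReal (φ x)) s ≤
      (m.withDensity fun x => ENNReal.ofReal (ψ x)) s := by
  rw [withDensity_apply _ hs, withDensity_apply _ hs, ← lintegral_const_mul' _ _ ofReal_ne_top]
  refine setLIntegral_mono (hψ.ennreal_ofReal) fun x hx => ?_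
  rw [← ENNReal.ofReal_mul ha]
  exact ENNReal.ofReal_le_ofReal (h x hx)

theorem correlated_sampling_ratio {Ω : Type*} [MeasurableSpace Ω] (m : Measure Ω)
    [SigmaFinite m] (f g : Ω → ℝ) (hf : Measurable f) (hg : Measurable g)
    (hfpos : ∀ x, 0 < f x) (hgpos : ∀ x, 0 < g x)
    (hf_fin : IsFiniteMeasure (m.withDensity fun x => ENNReal.ofReal (f x)))
    (hf_ne : m.withDensity (fun x => ENNReal.ofReal (f x)) ≠ 0)
    (hg_fin : IsFiniteMeasure (m.withDensity fun x => ENNReal.ofReal (g x)))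
    (hg_ne : m.withDensity (fun x => ENNReal.ofReal (g x)) ≠ 0)
    (ε δ : ℝ) (hε : 0 < ε) (hε' : ε ≤ 1 / 10) (hδ : 0 ≤ δ) (hδ' : δ ≤ 1) :
    let μ' := m.withDensity fun x => ENNReal.ofReal (f x)
    let ν' := m.withDensity fun x => ENNReal.ofReal (g x)
    let μ := (μ' Set.univ)⁻¹ • μ'
    let ν := (ν' Set.univ)⁻¹ • ν'
    (∀ S : Set Ω, MeasurableSet S →
        μ S ≤ ENNReal.ofReal (Real.exp (ε / 2)) * ν S + ENNReal.ofReal δ ∧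
          ν S ≤ ENNReal.ofReal (Real.exp (ε / 2)) * μ S + ENNReal.ofReal δ) →
      (μ.prod μ)
          {p : Ω × Ω |
            g p.1 * f p.2 / (f p.1 * g p.2) ∉
              Set.Icc (Real.exp (-2 * ε)) (Real.exp (2 * ε))} ≤
        ENNReal.ofReal (12 * δ / ε) := by
  intro μ' ν' μ ν hind
  -- normalizing constants
  set Zf := μ' Set.univ with hZf
  set Zg := ν' Set.univ with hZg
  have hZf0 : Zf ≠ 0 := Measure.measure_univ_ne_zero.mpr hf_ne
  have hZg0 : Zg ≠ 0 := Measure.measure_univ_ne_zero.mpr hg_ne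
  have hZft : Zf ≠ ⊤ := measure_ne_top μ' Set.univ
  have hZgt : Zg ≠ ⊤ := measure_ne_top ν' Set.univ
  have hZftR : (0:ℝ) < Zf.toReal := ENNReal.toReal_pos hZf0 hZft
  have hZgtR : (0:ℝ) < Zg.toReal := ENNReal.toReal_pos hZg0 hZgt
  set c : ℝ := Zf.toReal / Zg.toReal with hc_def
  have hc : 0 < c := div_pos hZftR hZgtR
  have hμapp : ∀ s : Set Ω, μ s = Zf⁻¹ * μ' s := fun s => by
    simp [μ, Measure.smul_apply, smul_eq_mul]; rfl
  have hνapp : ∀ s : Set Ω, ν s = Zg⁻¹ * ν' s := fun s => by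
    simp [ν, Measure.smul_apply, smul_eq_mul]; rfl
  have hμuniv : μ Set.univ = 1 := by
    rw [hμapp]; exact ENNReal.inv_mul_cancel hZf0 hZft
  haveI : IsProbabilityMeasure μ := ⟨hμuniv⟩
  -- the ratio function
  set u : Ω → ℝ := fun x => c * (g x / f x) with hu_def
  have hu : Measurable u := measurable_const.mul (hg.div hf)
  set A : Set Ω := {x | Real.exp ε < u x} with hA_def
  set B : Set Ω := {x | u x < Real.exp (-ε)} with hB_def
  have hA : MeasurableSet A := measurableSet_lt measurable_const hu
  have hB : MeasurableSet B := measurableSet_lt hu measurable_const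
  -- ofReal c facts
  have hcinv : ENNReal.ofReal c⁻¹ = Zg * Zf⁻¹ := by
    rw [hc_def, inv_div, ENNReal.ofReal_div_of_pos hZftR, ENNReal.ofReal_toReal hZgt,
      ENNReal.ofReal_toReal hZft, div_eq_mul_inv]
  have hcval : ENNReal.ofReal c = Zf * Zg⁻¹ := by
    rw [hc_def, ENNReal.ofReal_div_of_pos hZgtR, ENNReal.ofReal_toReal hZgt,
      ENNReal.ofReal_toReal hZft, div_eq_mul_inv]
  have cancelg : ∀ x : ℝ≥0∞, Zg⁻¹ * (Zg * x) = x := fun x => by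
    rw [← mul_assoc, ENNReal.inv_mul_cancel hZg0 hZgt, one_mul]
  have cancelf : ∀ x : ℝ≥0∞, Zf⁻¹ * (Zf * x) = x := fun x => by
    rw [← mul_assoc, ENNReal.inv_mul_cancel hZf0 hZft, one_mul]
  -- Step A : ofReal (exp ε) * μ A ≤ ν A
  have hstepA : ENNReal.ofReal (Real.exp ε) * μ A ≤ ν A := by
    have haux := aux_withDensity m f g hg (Real.exp ε * c⁻¹)
      (by positivity) A hA ?_
    · have h1 : ENNReal.ofReal (Real.exp ε * c⁻¹) * μ' A
          = Zg * (ENNReal.ofReal (Real.exp ε) * (Zf⁻¹ * μ' A)) := by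
        rw [ENNReal.ofReal_mul (Real.exp_pos ε).le, hcinv]; ring
      rw [hνapp, hμapp]
      rw [h1] at haux
      calc ENNReal.ofReal (Real.exp ε) * (Zf⁻¹ * μ' A)
          = Zg⁻¹ * (Zg * (ENNReal.ofReal (Real.exp ε) * (Zf⁻¹ * μ' A))) := (cancelg _).symm
        _ ≤ Zg⁻¹ * ν' A := mul_le_mul_right haux _
    · intro x hx
      have hx' : Real.exp ε < c * (g x / f x) := hx
      have hfx := hfpos x
      rw [mul_div_assoc'] at hx'
      have h2 : Real.exp ε * f x < c * g x := (lt_div_iff₀ hfx).mp hx'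
      have h3 : c⁻¹ * (Real.exp ε * f x) ≤ c⁻¹ * (c * g x) :=
        mul_le_mul_of_nonneg_left h2.le (inv_nonneg.mpr hc.le)
      have h4 : c⁻¹ * (c * g x) = g x := by field_simp
      nlinarith [h3, h4]
  -- Step B : ν B ≤ ofReal (exp (-ε)) * μ B
  have hstepB : ν B ≤ ENNReal.ofReal (Real.exp (-ε)) * μ B := by
    have haux := aux_withDensity m g f hf (Real.exp ε * c)
      (by positivity) B hB ?_
    · have h1 : ENNReal.ofReal (Real.exp ε * c) * ν' B
          = Zf * (ENNReal.ofReal (Real.exp ε) * (Zg⁻¹ * ν' B)) := by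
        rw [ENNReal.ofReal_mul (Real.exp_pos ε).le, hcval]; ring
      rw [h1] at haux
      have h2 : ENNReal.ofReal (Real.exp ε) * ν B ≤ μ B := by
        rw [hνapp, hμapp]
        calc ENNReal.ofReal (Real.exp ε) * (Zg⁻¹ * ν' B)
            = Zf⁻¹ * (Zf * (ENNReal.ofReal (Real.exp ε) * (Zg⁻¹ * ν' B))) := (cancelf _).symm
          _ ≤ Zf⁻¹ * μ' B := mul_le_mul_right haux _
      have h3 := mul_le_mul_right h2 (ENNReal.ofReal (Real.exp (-ε)))
      rwa [← mul_assoc, ← ENNReal.ofReal_mul (Real.exp_pos _).le, ← Real.exp_add,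
        neg_add_cancel, Real.exp_zero, ENNReal.ofReal_one, one_mul] at h3
    · intro x hx
      have hx' : c * (g x / f x) < Real.exp (-ε) := hx
      have hfx := hfpos x
      rw [mul_div_assoc'] at hx'
      have h2 : c * g x < Real.exp (-ε) * f x := (div_lt_iff₀ hfx).mp hx'
      have h3 : Real.exp ε * (c * g x) ≤ Real.exp ε * (Real.exp (-ε) * f x) :=
        mul_le_mul_of_nonneg_left h2.le (Real.exp_pos ε).le
      have h4 : Real.exp ε * Real.exp (-ε) = 1 := by
        rw [← Real.exp_add, add_neg_cancel, Real.exp_zero]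
      nlinarith [h3, h4]
  -- Bound on μ A
  have hμA : μ A ≤ ENNReal.ofReal (2 * δ / ε) := by
    have hiA := (hind A hA).2
    have h1 : ENNReal.ofReal (Real.exp ε) * μ A ≤
        ENNReal.ofReal (Real.exp (ε / 2)) * μ A + ENNReal.ofReal δ :=
      hstepA.trans hiA
    have hgap : (0:ℝ) < Real.exp ε - Real.exp (ε / 2) := by
      have := Real.exp_lt_exp.mpr (show ε / 2 < ε by linarith)
      linarith
    have hsplit : ENNReal.ofReal (Real.exp ε)
        = ENNReal.ofReal (Real.exp (ε / 2)) + ENNReal.ofReal (Real.exp ε - Real.exp (ε / 2)) := by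
      rw [← ENNReal.ofReal_add (Real.exp_pos _).le hgap.le]; ring_nf
    rw [hsplit, add_mul] at h1
    have h2 : ENNReal.ofReal (Real.exp ε - Real.exp (ε / 2)) * μ A ≤ ENNReal.ofReal δ :=
      (ENNReal.add_le_add_iff_left
        (ENNReal.mul_ne_top ofReal_ne_top (measure_ne_top μ A))).mp h1
    have h3 : μ A ≤ ENNReal.ofReal δ / ENNReal.ofReal (Real.exp ε - Real.exp (ε / 2)) := by
      rw [ENNReal.le_div_iff_mul_le (Or.inl (by simpa using hgap)) (Or.inl ofReal_ne_top)]
      rwa [mul_comm]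
    rw [← ENNReal.ofReal_div_of_pos hgap] at h3
    refine h3.trans (ENNReal.ofReal_le_ofReal ?_)
    have hexp2 : Real.exp ε = Real.exp (ε / 2) * Real.exp (ε / 2) := by
      rw [← Real.exp_add]; ring_nf
    have hlow : ε / 2 ≤ Real.exp ε - Real.exp (ε / 2) := by
      have h5 := Real.add_one_le_exp (ε / 2)
      nlinarith [Real.exp_pos (ε / 2)]
    rw [div_le_div_iff₀ hgap (by positivity)]
    nlinarith
  -- Bound on μ B
  have hμB : μ B ≤ ENNReal.ofReal (4 * δ / ε) := by
    have hiB := (hind B hB).1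
    have h1 : μ B ≤ ENNReal.ofReal (Real.exp (-(ε / 2))) * μ B + ENNReal.ofReal δ := by
      refine hiB.trans (add_le_add_left ?_ _)
      calc ENNReal.ofReal (Real.exp (ε / 2)) * ν B
          ≤ ENNReal.ofReal (Real.exp (ε / 2)) * (ENNReal.ofReal (Real.exp (-ε)) * μ B) :=
            mul_le_mul_right hstepB _
        _ = ENNReal.ofReal (Real.exp (-(ε / 2))) * μ B := by
            rw [← mul_assoc, ← ENNReal.ofReal_mul (Real.exp_pos _).le, ← Real.exp_add]
            ring_nf
    have hexple : Real.exp (-(ε / 2)) ≤ 1 := Real.exp_le_one_iff.mpr (by linarith)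
    have hsplit : (1:ℝ≥0∞)
        = ENNReal.ofReal (Real.exp (-(ε / 2))) + ENNReal.ofReal (1 - Real.exp (-(ε / 2))) := by
      rw [← ENNReal.ofReal_add (Real.exp_pos _).le (by linarith), ← ENNReal.ofReal_one]
      ring_nf
    have h1' : ENNReal.ofReal (Real.exp (-(ε / 2))) * μ B
        + ENNReal.ofReal (1 - Real.exp (-(ε / 2))) * μ B
        ≤ ENNReal.ofReal (Real.exp (-(ε / 2))) * μ B + ENNReal.ofReal δ := by
      calc ENNReal.ofReal (Real.exp (-(ε / 2))) * μ B
            + ENNReal.ofReal (1 - Real.exp (-(ε / 2))) * μ B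
          = 1 * μ B := by rw [hsplit, add_mul]
        _ = μ B := one_mul _
        _ ≤ _ := h1
    have h2 : ENNReal.ofReal (1 - Real.exp (-(ε / 2))) * μ B ≤ ENNReal.ofReal δ :=
      (ENNReal.add_le_add_iff_left
        (ENNReal.mul_ne_top ofReal_ne_top (measure_ne_top μ B))).mp h1'
    have hgap : ε / 4 ≤ 1 - Real.exp (-(ε / 2)) := by
      have h5 := Real.add_one_le_exp (ε / 2)
      have h6 : Real.exp (-(ε / 2)) * Real.exp (ε / 2) = 1 := by
        rw [← Real.exp_add, neg_add_cancel, Real.exp_zero]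
      nlinarith [Real.exp_pos (-(ε / 2)), Real.exp_pos (ε / 2)]
    have hgap0 : (0:ℝ) < 1 - Real.exp (-(ε / 2)) := by linarith
    have h3 : μ B ≤ ENNReal.ofReal δ / ENNReal.ofReal (1 - Real.exp (-(ε / 2))) := by
      rw [ENNReal.le_div_iff_mul_le (Or.inl (by simpa using hgap0)) (Or.inl ofReal_ne_top)]
      rwa [mul_comm]
    rw [← ENNReal.ofReal_div_of_pos hgap0] at h3
    refine h3.trans (ENNReal.ofReal_le_ofReal ?_)
    rw [div_le_div_iff₀ hgap0 (by positivity)]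
    nlinarith
  -- subset argument
  have hsub : {p : Ω × Ω |
      g p.1 * f p.2 / (f p.1 * g p.2) ∉ Set.Icc (Real.exp (-2 * ε)) (Real.exp (2 * ε))}
      ⊆ ((A ∪ B) ×ˢ Set.univ) ∪ (Set.univ ×ˢ (A ∪ B)) := by
    intro p hp
    by_contra hcon
    simp only [Set.mem_union, Set.mem_prod, Set.mem_univ, and_true, true_and, not_or] at hcon
    obtain ⟨⟨hx1, hx2⟩, hy1, hy2⟩ := hcon
    simp only [hA_def, Set.mem_setOf_eq, not_lt] at hx1 hy1
    simp only [hB_def, Set.mem_setOf_eq, not_lt] at hx2 hy2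
    apply hp
    have hfx := hfpos p.1; have hfy := hfpos p.2
    have hgx := hgpos p.1; have hgy := hgpos p.2
    have huy : 0 < u p.2 := lt_of_lt_of_le (Real.exp_pos _) hy2
    have hratio : g p.1 * f p.2 / (f p.1 * g p.2) = u p.1 / u p.2 := by
      simp only [hu_def]
      field_simp
    rw [hratio]
    constructor
    · have : Real.exp (-ε) / Real.exp ε ≤ u p.1 / u p.2 :=
        div_le_div₀ (le_of_lt (lt_of_lt_of_le (Real.exp_pos _) hx2)) hx2 huy hy1
      calc Real.exp (-2 * ε) = Real.exp (-ε) / Real.exp ε := by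
            rw [← Real.exp_sub]; ring_nf
        _ ≤ _ := this
    · have : u p.1 / u p.2 ≤ Real.exp ε / Real.exp (-ε) :=
        div_le_div₀ (Real.exp_pos _).le hx1 (Real.exp_pos _) hy2
      calc u p.1 / u p.2 ≤ Real.exp ε / Real.exp (-ε) := this
        _ = Real.exp (2 * ε) := by rw [← Real.exp_sub]; ring_nf
  -- put everything together
  calc (μ.prod μ) {p : Ω × Ω |
          g p.1 * f p.2 / (f p.1 * g p.2) ∉ Set.Icc (Real.exp (-2 * ε)) (Real.exp (2 * ε))}
      ≤ (μ.prod μ) (((A ∪ B) ×ˢ Set.univ) ∪ (Set.univ ×ˢ (A ∪ B))) := measure_mono hsub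
    _ ≤ (μ.prod μ) ((A ∪ B) ×ˢ Set.univ) + (μ.prod μ) (Set.univ ×ˢ (A ∪ B)) :=
        measure_union_le _ _
    _ = μ (A ∪ B) * μ Set.univ + μ Set.univ * μ (A ∪ B) := by
        rw [Measure.prod_prod, Measure.prod_prod]
    _ = μ (A ∪ B) + μ (A ∪ B) := by rw [hμuniv, mul_one, one_mul]
    _ ≤ (μ A + μ B) + (μ A + μ B) := by
        gcongr <;> exact measure_union_le _ _
    _ ≤ (ENNReal.ofReal (2 * δ / ε) + ENNReal.ofReal (4 * δ / ε))
        + (ENNReal.ofReal (2 * δ / ε) + ENNReal.ofReal (4 * δ / ε)) := by gcongr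
    _ = ENNReal.ofReal (12 * δ / ε) := by
        rw [← ENNReal.ofReal_add (by positivity) (by positivity),
          ← ENNReal.ofReal_add (by positivity) (by positivity)]
        congr 1
        field_simp
        ring
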